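/- Automatic closure theorem: if T : V → W is a continuous K-linear transformation between pro-finite-dimensional K-vector spaces (inverse limits of sequences of finite-dimensional K-vector spaces with the inverse-limit topology), then the image T(V) is a closed subspace of W. -/

import Mathlib

open Topology Filter

/-- The inverse limit of an inverse sequence of `K`-modules along the connecting
maps `q i : V (i+1) → V i`, realized as the submodule of consistent sequences in
the product `∀ i, V i`. -/
def invLim (K : Type) [Field K] (V : ℕ → Type) [∀ i, AddCommGroup (V i)]
    [∀ i, Module K (V i)] (q : ∀ i, V (i + 1) →ₗ[K] V i) : Submodule K (∀ i, V i) where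
  carrier := {v | ∀ i, q i (v (i + 1)) = v i}
  add_mem' := by intro a b ha hb i; simp [ha i, hb i]
  zero_mem' := by intro i; simp
  smul_mem' := by intro c a ha i; simp [ha i]

/-- The canonical projection `Q i` from the inverse limit to the `i`-th stage. -/
def invLimProj (K : Type) [Field K] (V : ℕ → Type) [∀ i, AddCommGroup (V i)]
    [∀ i, Module K (V i)] (q : ∀ i, V (i + 1) →ₗ[K] V i) (i : ℕ) :
    ↥(invLim K V q) →ₗ[K] V i :=
  (LinearMap.proj i).comp (invLim K V q).subtype

/-- The composite connecting map `q^j_i : V j → V i` for `i ≤ j`. -/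
def qIter (K : Type) [Field K] (V : ℕ → Type) [∀ i, AddCommGroup (V i)]
    [∀ i, Module K (V i)] (q : ∀ i, V (i + 1) →ₗ[K] V i) (i : ℕ) :
    ∀ j, i ≤ j → (V j →ₗ[K] V i)
  | 0, h => by
    have hi : i = 0 := Nat.le_zero.mp h
    subst hi; exact LinearMap.id
  | j + 1, h =>
    if heq : i = j + 1 then by subst heq; exact LinearMap.id
    else (qIter K V q i j (by omega)).comp (q j)

/-- Every `K`-subspace of a finite power of a topological field `K` is closed. -/
lemma closed_submodule_aux (K : Type) [Field K] [TopologicalSpace K] [IsTopologicalRing K]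
    [T1Space K] (d : ℕ) (S : Submodule K (Fin d → K)) : IsClosed (S : Set (Fin d → K)) := by
  let Q := (Fin d → K) ⧸ S
  let e := (Module.finBasis K Q).equivFun
  let f : (Fin d → K) →ₗ[K] (Fin (Module.finrank K Q) → K) := e.toLinearMap.comp S.mkQ
  have hf : Continuous f := f.continuous_on_pi
  have key : ∀ x, x ∈ S ↔ f x = 0 := by
    intro x
    have h1 : f x = e (S.mkQ x) := rfl
    rw [h1, show (0 : Fin (Module.finrank K Q) → K) = e 0 from (map_zero e).symm,
      e.injective.eq_iff, Submodule.mkQ_apply, Submodule.Quotient.mk_eq_zero]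
  have : (S : Set (Fin d → K)) = f ⁻¹' {0} := by
    ext x; simpa using key x
  rw [this]
  exact (isClosed_singleton).preimage hf

/-- Picking a consistent sequence through a tower of nonempty sets with
surjective-onto-each-other steps. -/
lemma seq_pick_aux {V : ℕ → Type} (D : ∀ i, Set (V i)) (q : ∀ i, V (i + 1) → V i)
    (h0 : (D 0).Nonempty) (hstep : ∀ i, ∀ a ∈ D i, ∃ b ∈ D (i + 1), q i b = a) :
    ∃ x : ∀ i, V i, (∀ i, x i ∈ D i) ∧ ∀ i, q i (x (i + 1)) = x i := by
  have hstep' : ∀ i (a : V i), a ∈ D i → ∃ b, b ∈ D (i + 1) ∧ q i b = a := by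
    intro i a ha; obtain ⟨b, hb1, hb2⟩ := hstep i a ha; exact ⟨b, hb1, hb2⟩
  choose b hb hq using hstep'
  let f : ∀ i, {a // a ∈ D i} := fun i =>
    Nat.rec ⟨h0.choose, h0.choose_spec⟩ (fun i p => ⟨b i p.1 p.2, hb i p.1 p.2⟩) i
  exact ⟨fun i => (f i).1, fun i => (f i).2, fun i => hq i (f i).1 (f i).2⟩

/-- Automatic closure theorem: every continuous `K`-linear map
`T : V → W` between pro-finite-dimensional `K`-vector spaces has closed image. -/
theorem stmt7 (K : Type) [Field K] [TopologicalSpace K] [IsTopologicalDivisionRing K]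
    [T2Space K]
    (n : ℕ → ℕ) (q : ∀ i, (Fin (n (i + 1)) → K) →ₗ[K] (Fin (n i) → K))
    (hq : ∀ i, Continuous (q i))
    (m : ℕ → ℕ) (r : ∀ j, (Fin (m (j + 1)) → K) →ₗ[K] (Fin (m j) → K))
    (hr : ∀ j, Continuous (r j))
    (T : ↥(invLim K (fun i => Fin (n i) → K) q) →ₗ[K]
      ↥(invLim K (fun j => Fin (m j) → K) r))
    (hT : Continuous T) :
    IsClosed (Set.range T : Set ↥(invLim K (fun j => Fin (m j) → K) r)) := by
  classical
  -- chain vanishing in the source inverse limit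
  have chain : ∀ (d : ℕ) (u : ↥(invLim K (fun i => Fin (n i) → K) q)) (i : ℕ),
      u.val (i + d) = 0 → u.val i = 0 := by
    intro d
    induction d with
    | zero => exact fun u i h => h
    | succ d ih =>
      intro u i h
      have h1 : u.val (i + 1) = 0 := by
        refine ih u (i + 1) ?_
        rw [show i + 1 + d = i + (d + 1) from by omega]
        exact h
      have h2 : q i (u.val (i + 1)) = u.val i := u.2 i
      rw [← h2, h1, map_zero]
  have chain' : ∀ (u : ↥(invLim K (fun i => Fin (n i) → K) q)) (i₀ i : ℕ), i ≤ i₀ →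
      u.val i₀ = 0 → u.val i = 0 := by
    intro u i₀ i hle h0
    refine chain (i₀ - i) u i ?_
    rw [show i + (i₀ - i) = i₀ from by omega]
    exact h0
  -- Step 3: each coordinate of T factors (kernel-wise) through a finite stage
  have step3 : ∀ j, ∃ i₀ : ℕ, ∀ u : ↥(invLim K (fun i => Fin (n i) → K) q),
      u.val i₀ = 0 → (T u).val j = 0 := by
    intro j
    obtain ⟨A, hAmem, hA1⟩ : ∃ A : Set K, A ∈ 𝓝 (0 : K) ∧ (1 : K) ∉ A :=
      ⟨{(1 : K)}ᶜ, (isOpen_compl_singleton).mem_nhds (by simp), by simp⟩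
    set φ : ↥(invLim K (fun i => Fin (n i) → K) q) → (Fin (m j) → K) :=
      fun v => (T v).val j with hφdef
    have hφc : Continuous φ := (continuous_apply j).comp (continuous_subtype_val.comp hT)
    have hφ0 : φ 0 = 0 := by simp [hφdef, map_zero]
    have hφsmul : ∀ (c : K) v, φ (c • v) = c • φ v := by
      intro c v
      simp [hφdef, map_smul]
    have hU : (Set.univ.pi fun _ : Fin (m j) => A) ∈ 𝓝 (0 : Fin (m j) → K) :=
      set_pi_mem_nhds Set.finite_univ fun k _ => hAmem
    have hpre : φ ⁻¹' (Set.univ.pi fun _ : Fin (m j) => A) ∈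
        𝓝 (0 : ↥(invLim K (fun i => Fin (n i) → K) q)) :=
      hφc.continuousAt.preimage_mem_nhds (by rw [hφ0]; exact hU)
    rw [nhds_subtype_eq_comap] at hpre
    obtain ⟨Z, hZ, hZsub⟩ := Filter.mem_comap.mp hpre
    have hZ' : Z ∈ 𝓝 (0 : ∀ i, Fin (n i) → K) := by
      simpa using hZ
    rw [nhds_pi] at hZ'
    obtain ⟨I, hIfin, t, htmem, htsub⟩ := Filter.mem_pi.mp hZ'
    obtain ⟨i₀, hi₀⟩ := hIfin.bddAbove
    refine ⟨i₀, fun u hu => ?_⟩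
    have hsm : ∀ c : K, φ (c • u) ∈ Set.univ.pi fun _ : Fin (m j) => A := by
      intro c
      apply hZsub
      show (c • u).val ∈ Z
      apply htsub
      intro i hi
      have hle : i ≤ i₀ := hi₀ hi
      have hcu : (c • u).val i₀ = 0 := by
        have : (c • u).val i₀ = c • u.val i₀ := rfl
        rw [this, hu, smul_zero]
      have : (c • u).val i = 0 := chain' (c • u) i₀ i hle hcu
      rw [this]
      exact mem_of_mem_nhds (htmem i)
    funext k
    by_contra hk
    set c : K := ((T u).val j k)⁻¹ with hc
    have h3 : φ (c • u) k ∈ A := hsm c k (Set.mem_univ k)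
    have h2 : φ (c • u) k = 1 := by
      rw [hφsmul]
      show c * ((T u).val j k) = 1
      exact inv_mul_cancel₀ hk
    rw [h2] at h3
    exact hA1 h3
  -- the candidate closed set: cut out by the finite-stage ranges
  have key : Set.range T = ⋂ j, (fun w : ↥(invLim K (fun j' => Fin (m j') → K) r) =>
      w.val j) ⁻¹' (LinearMap.range
        ((invLimProj K (fun j' => Fin (m j') → K) r j).comp T) : Set (Fin (m j) → K)) := by
    apply Set.Subset.antisymm
    · rintro w ⟨v, rfl⟩
      refine Set.mem_iInter.mpr fun j => ?_
      exact ⟨v, rfl⟩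
    · intro w hwmem
      have hw : ∀ j, ∃ v : ↥(invLim K (fun i => Fin (n i) → K) q),
          (T v).val j = w.val j := by
        intro j
        have := Set.mem_iInter.mp hwmem j
        obtain ⟨v, hv⟩ := this
        exact ⟨v, hv⟩
      -- the Mittag-Leffler style lifting argument
      set N : ℕ → Submodule K ↥(invLim K (fun i => Fin (n i) → K) q) :=
        fun j => LinearMap.ker ((invLimProj K (fun j' => Fin (m j') → K) r j).comp T)
        with hNdef
      have hNmem : ∀ j v, v ∈ N j ↔ (T v).val j = 0 := by
        intro j v
        rw [hNdef]
        exact LinearMap.mem_ker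
      set A : ℕ → Set ↥(invLim K (fun i => Fin (n i) → K) q) :=
        fun j => {v | (T v).val j = w.val j} with hAdef
      have hAne : ∀ j, (A j).Nonempty := fun j => (hw j).imp fun v hv => hv
      have hAanti : Antitone A := by
        apply antitone_nat_of_succ_le
        intro j v hv
        have hv' : (T v).val (j + 1) = w.val (j + 1) := hv
        show (T v).val j = w.val j
        rw [← (T v).2 j, ← w.2 j, hv']
      have hNanti : Antitone N := by
        apply antitone_nat_of_succ_le
        intro j v hv
        rw [hNmem] at hv ⊢
        rw [← (T v).2 j, hv, map_zero]
      set PA : ∀ i : ℕ, ℕ → Set (Fin (n i) → K) :=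
        fun i j => (fun v : ↥(invLim K (fun i' => Fin (n i') → K) q) => v.val i) '' A j
        with hPAdef
      have hPAne : ∀ i j, (PA i j).Nonempty := fun i j => (hAne j).image _
      have hPAanti : ∀ i, Antitone (PA i) := fun i j j' h =>
        Set.image_mono (hAanti h)
      -- stabilization of the projected affine sets
      have hstab : ∀ i, ∃ J, ∀ j, J ≤ j → PA i j = PA i J := by
        intro i
        obtain ⟨J, hJraw⟩ := IsArtinian.monotone_stabilizes
          (⟨fun j => OrderDual.toDual
              (Submodule.map (invLimProj K (fun i' => Fin (n i') → K) q i) (N j)),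
            fun j j' h => Submodule.map_mono (hNanti h)⟩ :
            ℕ →o (Submodule K (Fin (n i) → K))ᵒᵈ)
        have hJ : ∀ j, J ≤ j →
            Submodule.map (invLimProj K (fun i' => Fin (n i') → K) q i) (N j) =
            Submodule.map (invLimProj K (fun i' => Fin (n i') → K) q i) (N J) :=
          fun j h => (hJraw j h).symm
        refine ⟨J, fun j hj => Set.Subset.antisymm (hPAanti i hj) ?_⟩
        rintro x ⟨u, hu, rfl⟩
        obtain ⟨v, hv⟩ := hAne j
        have hvJ : v ∈ A J := hAanti hj hv
        have hu' : (T u).val J = w.val J := hu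
        have hvJ' : (T v).val J = w.val J := hvJ
        have huv : u - v ∈ N J := by
          rw [hNmem]
          have heq : (T (u - v)) = T u - T v := map_sub T u v
          rw [heq]
          show (T u - T v).val J = 0
          have h1 : (T u - T v).val J = (T u).val J - (T v).val J := rfl
          rw [h1, hu', hvJ', sub_self]
        have hx : u.val i - v.val i ∈
            Submodule.map (invLimProj K (fun i' => Fin (n i') → K) q i) (N j) := by
          rw [hJ j hj]
          exact ⟨u - v, huv, rfl⟩
        obtain ⟨nn, hnn, hnni⟩ := hx
        refine ⟨v + nn, ?_, ?_⟩
        · show (T (v + nn)).val j = w.val j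
          have h1 : T (v + nn) = T v + T nn := map_add T v nn
          rw [h1]
          have h2 : (T v + T nn).val j = (T v).val j + (T nn).val j := rfl
          have hv' : (T v).val j = w.val j := hv
          rw [h2, hv', (hNmem j nn).mp hnn, add_zero]
        · show (v + nn).val i = u.val i
          have h1 : (v + nn).val i = v.val i + nn.val i := rfl
          have h2 : nn.val i = u.val i - v.val i := hnni
          rw [h1, h2]
          abel
      choose J hJ using hstab
      set D : ∀ i, Set (Fin (n i) → K) := fun i => PA i (J i) with hDdef
      have hD2 : ∀ i j, D i ⊆ PA i j := by
        intro i j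
        calc D i = PA i (max j (J i)) := (hJ i _ (le_max_right _ _)).symm
        _ ⊆ PA i j := hPAanti i (le_max_left _ _)
      have hD1 : (D 0).Nonempty := hPAne 0 (J 0)
      have hD3 : ∀ i, ∀ a ∈ D i, ∃ b ∈ D (i + 1), q i b = a := by
        intro i a ha
        have h1 : D i = PA i (max (J i) (J (i + 1))) :=
          (hJ i _ (le_max_left _ _)).symm
        have h2 : D (i + 1) = PA (i + 1) (max (J i) (J (i + 1))) :=
          (hJ (i + 1) _ (le_max_right _ _)).symm
        rw [h1] at ha
        obtain ⟨u, hu, rfl⟩ := ha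
        refine ⟨u.val (i + 1), ?_, u.2 i⟩
        rw [h2]
        exact ⟨u, hu, rfl⟩
      obtain ⟨x, hxD, hxq⟩ := seq_pick_aux D (fun i => (q i : _ → _)) hD1 hD3
      have hxmem : x ∈ invLim K (fun i => Fin (n i) → K) q := hxq
      refine ⟨⟨x, hxmem⟩, ?_⟩
      apply Subtype.ext
      funext j
      obtain ⟨i₀, hi₀⟩ := step3 j
      have hx0 : x i₀ ∈ PA i₀ j := hD2 i₀ j (hxD i₀)
      obtain ⟨u, hu, hui⟩ := hx0
      have hz : ((⟨x, hxmem⟩ : ↥(invLim K (fun i => Fin (n i) → K) q)) - u).val i₀ = 0 := by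
        have h1 : ((⟨x, hxmem⟩ : ↥(invLim K (fun i => Fin (n i) → K) q)) - u).val i₀ =
            x i₀ - u.val i₀ := rfl
        have hui' : u.val i₀ = x i₀ := hui
        rw [h1, hui', sub_self]
      have h0 := hi₀ _ hz
      have h1 : T ((⟨x, hxmem⟩ : ↥(invLim K (fun i => Fin (n i) → K) q)) - u) =
          T ⟨x, hxmem⟩ - T u := map_sub T _ u
      rw [h1] at h0
      have h2 : (T ⟨x, hxmem⟩ - T u).val j = (T ⟨x, hxmem⟩).val j - (T u).val j := rfl
      rw [h2] at h0
      have h3 : (T ⟨x, hxmem⟩).val j = (T u).val j := sub_eq_zero.mp h0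
      show (T ⟨x, hxmem⟩).val j = w.val j
      rw [h3]
      exact hu
  rw [key]
  refine isClosed_iInter fun j => ?_
  have hc : Continuous (fun w : ↥(invLim K (fun j' => Fin (m j') → K) r) => w.val j) :=
    (continuous_apply j).comp continuous_subtype_val
  exact (closed_submodule_aux K (m j) _).preimage hc
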